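/- The maximum of cycdes(x) over all words x ∈ [k]^n equals ⌊n(k−1)/k⌋. -/

import Mathlib

/-- The number of descents of a word `x ∈ [k]ⁿ`. -/
def wordDes {k n : ℕ} (x : Fin n → Fin k) : ℕ :=
  (Finset.univ.filter fun p : Fin n × Fin n =>
      (p.2 : ℕ) = (p.1 : ℕ) + 1 ∧ x p.2 < x p.1).card

/-- The number of descents and cyclic descents of a cyclic word `x ∈ [k]ⁿ`:
the descents together with the extra cyclic descent at `i = n` when `x n > x 1`. -/
def wordCycDes {k n : ℕ} (x : Fin n → Fin k) : ℕ :=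
  wordDes x +
    (Finset.univ.filter fun p : Fin n × Fin n =>
        (p.1 : ℕ) + 1 = n ∧ (p.2 : ℕ) = 0 ∧ x p.2 < x p.1).card

/-- Cyclic successor on `Fin n`. -/
def csucc {n : ℕ} (hn : 0 < n) (i : Fin n) : Fin n :=
  ⟨(i.val + 1) % n, Nat.mod_lt _ hn⟩

lemma csucc_val_of_lt {n : ℕ} (hn : 0 < n) (i : Fin n) (h : i.val + 1 < n) :
    (csucc hn i).val = i.val + 1 := Nat.mod_eq_of_lt h

lemma csucc_val_of_eq {n : ℕ} (hn : 0 < n) (i : Fin n) (h : i.val + 1 = n) :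
    (csucc hn i).val = 0 := by simp [csucc, h]

lemma csucc_bijective {n : ℕ} (hn : 0 < n) : Function.Bijective (csucc hn) := by
  rw [Fintype.bijective_iff_injective_and_card]
  refine ⟨fun a b hab => ?_, rfl⟩
  have h : (a.val + 1) % n = (b.val + 1) % n := congrArg Fin.val hab
  have ha := a.isLt; have hb := b.isLt
  have e1 : (a.val + 1) % n = if a.val + 1 = n then 0 else a.val + 1 := by
    split
    · next hh => simp [hh]
    · next hh => exact Nat.mod_eq_of_lt (by omega)
  have e2 : (b.val + 1) % n = if b.val + 1 = n then 0 else b.val + 1 := by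
    split
    · next hh => simp [hh]
    · next hh => exact Nat.mod_eq_of_lt (by omega)
  apply Fin.ext
  rw [e1, e2] at h
  split at h <;> split at h <;> omega

/-- `wordCycDes` counts cyclic descent positions. -/
lemma wordCycDes_eq {k n : ℕ} (hn : 0 < n) (x : Fin n → Fin k) :
    wordCycDes x = (Finset.univ.filter fun i : Fin n => x (csucc hn i) < x i).card := by
  classical
  have h1 : wordDes x =
      (Finset.univ.filter fun i : Fin n =>
        i.val + 1 < n ∧ x (csucc hn i) < x i).card := by
    refine Finset.card_bij' (fun p _ => p.1) (fun i _ => (i, csucc hn i)) ?_ ?_ ?_ ?_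
    · intro p hp
      simp only [Finset.mem_filter, Finset.mem_univ, true_and] at hp ⊢
      have hlt : p.1.val + 1 < n := by have := p.2.isLt; omega
      have hs : csucc hn p.1 = p.2 := by
        apply Fin.ext; rw [csucc_val_of_lt hn p.1 hlt]; omega
      exact ⟨hlt, by rw [hs]; exact hp.2⟩
    · intro i hi
      simp only [Finset.mem_filter, Finset.mem_univ, true_and] at hi ⊢
      exact ⟨csucc_val_of_lt hn i hi.1, hi.2⟩
    · intro p hp
      simp only [Finset.mem_filter, Finset.mem_univ, true_and] at hp
      have hlt : p.1.val + 1 < n := by have := p.2.isLt; omega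
      have hs : csucc hn p.1 = p.2 := by
        apply Fin.ext; rw [csucc_val_of_lt hn p.1 hlt]; omega
      exact Prod.ext rfl hs
    · intro i hi; rfl
  have h2 : (Finset.univ.filter fun p : Fin n × Fin n =>
        (p.1 : ℕ) + 1 = n ∧ (p.2 : ℕ) = 0 ∧ x p.2 < x p.1).card =
      (Finset.univ.filter fun i : Fin n =>
        i.val + 1 = n ∧ x (csucc hn i) < x i).card := by
    refine Finset.card_bij' (fun p _ => p.1) (fun i _ => (i, csucc hn i)) ?_ ?_ ?_ ?_
    · intro p hp
      simp only [Finset.mem_filter, Finset.mem_univ, true_and] at hp ⊢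
      have hs : csucc hn p.1 = p.2 := by
        apply Fin.ext; rw [csucc_val_of_eq hn p.1 hp.1]; omega
      exact ⟨hp.1, by rw [hs]; exact hp.2.2⟩
    · intro i hi
      simp only [Finset.mem_filter, Finset.mem_univ, true_and] at hi ⊢
      exact ⟨hi.1, csucc_val_of_eq hn i hi.1, hi.2⟩
    · intro p hp
      simp only [Finset.mem_filter, Finset.mem_univ, true_and] at hp
      have hs : csucc hn p.1 = p.2 := by
        apply Fin.ext; rw [csucc_val_of_eq hn p.1 hp.1]; omega
      exact Prod.ext rfl hs
    · intro i hi; rfl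
  rw [wordCycDes, h1, h2]
  have h3 := Finset.card_filter_add_card_filter_not
    (s := Finset.univ.filter fun i : Fin n => x (csucc hn i) < x i)
    (p := fun i : Fin n => i.val + 1 < n)
  rw [Finset.filter_filter, Finset.filter_filter] at h3
  rw [← h3]
  congr 1
  · exact congrArg Finset.card (Finset.filter_congr (fun i _ => by
      constructor <;> (intro h; exact ⟨h.2, h.1⟩)))
  · exact congrArg Finset.card (Finset.filter_congr (fun i _ => by
      have := i.isLt
      constructor
      · intro h; exact ⟨h.2, by omega⟩
      · intro h; exact ⟨by omega, h.1⟩))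

/-- Upper bound: any cyclic descent set has size at most `n(k-1)/k`. -/
lemma descents_le {k n : ℕ} (hk : 1 ≤ k) (hn : 0 < n) (x : Fin n → Fin k) :
    (Finset.univ.filter fun i : Fin n => x (csucc hn i) < x i).card ≤ n * (k - 1) / k := by
  classical
  set D := Finset.univ.filter fun i : Fin n => x (csucc hn i) < x i with hD
  set N := Finset.univ.filter fun i : Fin n => ¬ x (csucc hn i) < x i with hN
  have hcard : D.card + N.card = n := by
    have := Finset.card_filter_add_card_filter_not
      (s := (Finset.univ : Finset (Fin n)))
      (p := fun i : Fin n => x (csucc hn i) < x i)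
    rw [Finset.card_univ, Fintype.card_fin] at this
    exact this
  -- telescoping sum
  have hsum : ∑ i : Fin n, ((x (csucc hn i) : ℤ)) = ∑ i : Fin n, ((x i : ℤ)) :=
    Fintype.sum_bijective (csucc hn) (csucc_bijective hn)
      (fun i => ((x (csucc hn i) : ℤ))) (fun i => ((x i : ℤ))) (fun i => rfl)
  have hzero : ∑ i : Fin n, (((x (csucc hn i) : ℤ)) - ((x i : ℤ))) = 0 := by
    rw [Finset.sum_sub_distrib, hsum, sub_self]
  have hle : ∑ i : Fin n, (((x (csucc hn i) : ℤ)) - ((x i : ℤ))) ≤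
      ∑ i : Fin n, (if x (csucc hn i) < x i then (-1 : ℤ) else (k : ℤ) - 1) := by
    apply Finset.sum_le_sum
    intro i _
    split
    · next h =>
      have hv : ((x (csucc hn i)).val : ℕ) < (x i).val := h
      have h1 : ((x (csucc hn i)).val : ℤ) < ((x i).val : ℤ) := by exact_mod_cast hv
      push_cast
      omega
    · next h =>
      have h1 : ((x (csucc hn i)).val : ℕ) < k := (x (csucc hn i)).isLt
      have h2 : (0 : ℕ) ≤ (x i).val := Nat.zero_le _
      have h3 : ((x (csucc hn i)).val : ℤ) < (k : ℤ) := by exact_mod_cast h1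
      push_cast
      omega
  rw [Finset.sum_ite] at hle
  rw [Finset.sum_const, Finset.sum_const] at hle
  rw [hzero] at hle
  rw [← hD, ← hN] at hle
  have hle2 : (0 : ℤ) ≤ -(D.card : ℤ) + N.card * ((k : ℤ) - 1) := by
    simpa [nsmul_eq_mul, mul_comm] using hle
  have hkey : (n : ℤ) ≤ (k : ℤ) * N.card := by nlinarith [hle2, hcard]
  have hkeyn : n ≤ k * N.card := by exact_mod_cast hkey
  -- conclude
  rw [Nat.le_div_iff_mul_le (by omega : 0 < k)]
  have h1 : D.card * k + N.card * k = n * k := by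
    rw [← add_mul, hcard]
  have h2 : n * (k - 1) + n = n * k := by
    rw [← Nat.mul_succ]; congr 1; omega
  have h3 : n ≤ N.card * k := by rw [mul_comm] at hkeyn; exact hkeyn
  omega

/-- Arithmetic: `n*(k-1)/k + ((n-1)/k + 1) ≤ n`. -/
lemma arith_key {k n : ℕ} (hk : 1 ≤ k) (hn : 1 ≤ n) :
    n * (k - 1) / k + ((n - 1) / k + 1) ≤ n := by
  have hq : (n - 1) / k ≤ n - 1 := Nat.div_le_self _ _
  have hdm := Nat.div_add_mod (n - 1) k
  set q := (n - 1) / k with hqdef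
  set r := (n - 1) % k with hrdef
  have hr : r < k := Nat.mod_lt _ (by omega)
  have hmain : n * (k - 1) / k ≤ n - 1 - q := by
    rw [Nat.div_le_iff_le_mul_add_pred (by omega : 0 < k)]
    -- n*(k-1) ≤ k*(n-1-q) + (k-1)
    have hn1 : n - 1 = k * q + r := hdm.symm
    have hcast : (n : ℤ) * (k - 1) ≤ (k : ℤ) * ((n : ℤ) - 1 - q) + (k - 1) := by
      have hnz : (n : ℤ) - 1 = k * q + r := by
        have h01 : ((n - 1 : ℕ) : ℤ) = (k : ℤ) * q + r := by exact_mod_cast congrArg (Nat.cast : ℕ → ℤ) hn1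
        have h02 : ((n - 1 : ℕ) : ℤ) = (n : ℤ) - 1 := by
          push_cast [Nat.cast_sub hn]; ring
        rw [h02] at h01; exact h01
      nlinarith [hnz, (by exact_mod_cast hr : (r : ℤ) < k)]
    have h1 : ((n * (k - 1) : ℕ) : ℤ) = (n : ℤ) * (k - 1) := by
      push_cast [Nat.cast_sub hk]; ring
    have h2 : ((k * (n - 1 - q) + (k - 1) : ℕ) : ℤ) = (k : ℤ) * ((n : ℤ) - 1 - q) + (k - 1) := by
      have hq2 : q ≤ n - 1 := hq
      push_cast [Nat.cast_sub hk, Nat.cast_sub hq2, Nat.cast_sub hn]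
      ring
    have := hcast
    rw [← h1, ← h2] at this
    exact_mod_cast this
  omega

/-- The maximum of `cycdes x` over all words `x ∈ [k]ⁿ` equals `⌊n(k−1)/k⌋`. -/
theorem max_cyclic_descents_words (k n : ℕ) (hk : 1 ≤ k) (hn : 1 ≤ n) :
    IsGreatest {a : ℕ | ∃ x : Fin n → Fin k, wordCycDes x = a} (n * (k - 1) / k) := by
  classical
  have hn0 : 0 < n := hn
  constructor
  · -- membership: the repeating decreasing word attains the maximum
    set x₀ : Fin n → Fin k := fun i => ⟨k - 1 - i.val % k, by omega⟩ with hx₀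
    refine ⟨x₀, ?_⟩
    rw [wordCycDes_eq hn0]
    set D := Finset.univ.filter fun i : Fin n => x₀ (csucc hn0 i) < x₀ i with hD
    set N := Finset.univ.filter fun i : Fin n => ¬ x₀ (csucc hn0 i) < x₀ i with hN
    have hcard : D.card + N.card = n := by
      have := Finset.card_filter_add_card_filter_not
        (s := (Finset.univ : Finset (Fin n)))
        (p := fun i : Fin n => x₀ (csucc hn0 i) < x₀ i)
      rw [Finset.card_univ, Fintype.card_fin] at this
      exact this
    have hub := descents_le hk hn0 x₀
    rw [← hD] at hub
    have hval : ∀ j : Fin n, (x₀ j).val = k - 1 - j.val % k := fun j => rfl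
    have hmem : ∀ i ∈ N, i.val % k = k - 1 ∨ i.val + 1 = n := by
      intro i hi
      rw [hN, Finset.mem_filter] at hi
      by_contra hcon
      push_neg at hcon
      obtain ⟨hc1, hc2⟩ := hcon
      have hlt : i.val + 1 < n := by have := i.isLt; omega
      apply hi.2
      have hs : (csucc hn0 i).val = i.val + 1 := csucc_val_of_lt hn0 i hlt
      have hmod : i.val % k < k - 1 := by
        have := Nat.mod_lt i.val (show 0 < k by omega)
        omega
      have hmod2 : (i.val + 1) % k = i.val % k + 1 := by
        rw [Nat.add_mod, Nat.mod_eq_of_lt (show 1 < k by omega)]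
        exact Nat.mod_eq_of_lt (by omega)
      rw [Fin.lt_def, hval, hval, hs, hmod2]
      omega
    have hNle : N.card ≤ (n - 1) / k + 1 := by
      rw [← Finset.card_range ((n - 1) / k + 1)]
      apply Finset.card_le_card_of_injOn (fun i : Fin n => i.val / k)
        (t := Finset.range ((n - 1) / k + 1))
      · intro i _
        rw [Finset.mem_coe, Finset.mem_range, Nat.lt_succ_iff]
        exact Nat.div_le_div_right (by have := i.isLt; omega)
      · intro a ha b hb hab
        have Ha := hmem a (Finset.mem_coe.mp ha)
        have Hb := hmem b (Finset.mem_coe.mp hb)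
        have da := Nat.div_add_mod a.val k
        have db := Nat.div_add_mod b.val k
        simp only at hab
        rw [hab] at da
        have haa : a.val < n := a.isLt
        have hbb : b.val < n := b.isLt
        set sa := a.val % k with hsa
        set sb := b.val % k with hsb
        have hma : sa < k := Nat.mod_lt _ (by omega)
        have hmb : sb < k := Nat.mod_lt _ (by omega)
        set u := k * (b.val / k) with hu
        apply Fin.ext
        rcases Ha with h | h <;> rcases Hb with h' | h' <;> omega
    have harith := arith_key hk hn
    omega
  · -- upper bound
    rintro a ⟨x, hx⟩
    rw [← hx, wordCycDes_eq hn0]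
    exact descents_le hk hn0 x
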